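/- Under the hypotheses that f : F_2^n → {0,1} has f(0)=1, f̂(0)=1/2^{k−1}, and all other Fourier coefficients in {0, ±1/2^k}, the sets 2B and 3B are disjoint, where B = {β : f̂(β) = −1/2^k}, 2B = B+B, and 3B = B+B+B. -/

import Mathlib

open Finset Pointwise

/-- The Fourier coefficient `f̂(α) = E_x[f(x)·(-1)^⟨α,x⟩]` of `f : F_2^n → ℝ`. -/
noncomputable def fc {n : ℕ} (f : (Fin n → ZMod 2) → ℝ) (α : Fin n → ZMod 2) : ℝ :=
  (∑ x : Fin n → ZMod 2, f x * (-1 : ℝ) ^ (∑ i, α i * x i : ZMod 2).val) / 2 ^ n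


noncomputable def chi {n : ℕ} (α x : Fin n → ZMod 2) : ℝ :=
  (-1 : ℝ) ^ (∑ i, α i * x i : ZMod 2).val

lemma zmod2_cases' : ∀ a : ZMod 2, a = 0 ∨ a = 1 := by decide
lemma zmod2_cases (a : ZMod 2) : a = 0 ∨ a = 1 := zmod2_cases' a

lemma neg_one_pow_val_add (a b : ZMod 2) :
    ((-1 : ℝ)) ^ ((a + b).val) = (-1) ^ a.val * (-1) ^ b.val := by
  have h00 : ((0 : ZMod 2) + 0).val = 0 := rfl
  have h01 : ((0 : ZMod 2) + 1).val = 1 := rfl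
  have h10 : ((1 : ZMod 2) + 0).val = 1 := rfl
  have h11 : ((1 : ZMod 2) + 1).val = 0 := rfl
  have hv0 : (0 : ZMod 2).val = 0 := rfl
  have hv1 : (1 : ZMod 2).val = 1 := rfl
  rcases zmod2_cases a with ha | ha <;> rcases zmod2_cases b with hb | hb <;>
    subst ha <;> subst hb <;>
    simp [h00, h01, h10, h11, hv0, hv1]

lemma chi_add_left {n : ℕ} (α β x : Fin n → ZMod 2) :
    chi (α + β) x = chi α x * chi β x := by
  unfold chi
  have hs : (∑ i, (α + β) i * x i) = (∑ i, α i * x i) + (∑ i, β i * x i) := by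
    rw [← Finset.sum_add_distrib]
    apply Finset.sum_congr rfl
    intro i _
    simp [add_mul]
  rw [hs, neg_one_pow_val_add]

lemma chi_add_right {n : ℕ} (α x y : Fin n → ZMod 2) :
    chi α (x + y) = chi α x * chi α y := by
  unfold chi
  have hs : (∑ i, α i * (x + y) i) = (∑ i, α i * x i) + (∑ i, α i * y i) := by
    rw [← Finset.sum_add_distrib]
    apply Finset.sum_congr rfl
    intro i _
    simp [mul_add]
  rw [hs, neg_one_pow_val_add]

lemma chi_comm {n : ℕ} (α x : Fin n → ZMod 2) : chi α x = chi x α := by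
  unfold chi
  have hs : (∑ i, α i * x i) = (∑ i, x i * α i) := by
    apply Finset.sum_congr rfl
    intro i _
    exact mul_comm _ _
  rw [hs]

lemma chi_zero_right {n : ℕ} (α : Fin n → ZMod 2) : chi α 0 = 1 := by
  unfold chi; simp

lemma gadd_self {n : ℕ} (x : Fin n → ZMod 2) : x + x = 0 := by
  funext i
  have : ∀ a : ZMod 2, a + a = 0 := by decide
  exact this _

lemma sum_chi {n : ℕ} (z : Fin n → ZMod 2) :
    ∑ γ : Fin n → ZMod 2, chi γ z = if z = 0 then (2 : ℝ) ^ n else 0 := by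
  split_ifs with hz
  · subst hz
    have : ∀ γ : Fin n → ZMod 2, chi γ 0 = 1 := chi_zero_right
    simp [this, Finset.card_univ]
  · obtain ⟨i, hi⟩ : ∃ i, z i ≠ 0 := by
      by_contra hc
      push_neg at hc
      exact hz (funext hc)
    have hzi : z i = 1 := by
      rcases zmod2_cases (z i) with h | h
      · exact absurd h hi
      · exact h
    set e : Fin n → ZMod 2 := Pi.single i 1 with he
    have hce : chi e z = -1 := by
      unfold chi
      have hs : (∑ j, e j * z j) = z i := by
        rw [he, Finset.sum_eq_single i]
        · simp
        · intro j _ hj; simp [Pi.single_apply, hj]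
        · simp
      rw [hs, hzi]
      norm_num [show (1 : ZMod 2).val = 1 from rfl]
    have key : ∑ γ : Fin n → ZMod 2, chi γ z
        = ∑ γ : Fin n → ZMod 2, chi (γ + e) z :=
      (Fintype.sum_equiv (Equiv.addRight e) _ _ (fun γ => rfl)).symm
    have h3 : ∑ γ : Fin n → ZMod 2, chi (γ + e) z
        = -∑ γ : Fin n → ZMod 2, chi γ z := by
      rw [← Finset.sum_neg_distrib]
      apply Finset.sum_congr rfl
      intro γ _
      rw [chi_add_left, hce]; ring
    have h2 := key.trans h3
    linarith

lemma sum_chi' {n : ℕ} (z : Fin n → ZMod 2) :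
    ∑ γ : Fin n → ZMod 2, chi z γ = if z = 0 then (2 : ℝ) ^ n else 0 := by
  rw [Finset.sum_congr rfl (fun γ _ => chi_comm z γ), sum_chi]

lemma cancel_left {n : ℕ} {x y : Fin n → ZMod 2} (hxy : x + y = 0) : y = x := by
  calc y = (x + x) + y := by rw [gadd_self, zero_add]
  _ = x + (x + y) := by rw [add_assoc]
  _ = x := by rw [hxy, add_zero]

lemma fc_eq {n : ℕ} (f : (Fin n → ZMod 2) → ℝ) (α : Fin n → ZMod 2) :
    fc f α = (∑ x : Fin n → ZMod 2, f x * chi α x) / 2 ^ n := rfl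

lemma sum_fc {n : ℕ} (f : (Fin n → ZMod 2) → ℝ) :
    ∑ α : Fin n → ZMod 2, fc f α = f 0 := by
  have hC : ((2:ℝ)^n) ≠ 0 := by positivity
  have h1 : ∑ α : Fin n → ZMod 2, fc f α
      = (∑ x : Fin n → ZMod 2, f x * ∑ α : Fin n → ZMod 2, chi x α) / 2 ^ n := by
    simp only [fc_eq, ← Finset.sum_div]
    congr 1
    rw [Finset.sum_comm]
    apply Finset.sum_congr rfl
    intro x _
    rw [← Finset.mul_sum]
    congr 1
    apply Finset.sum_congr rfl
    intro α _
    exact chi_comm α x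
  rw [h1]
  have h2 : ∑ x : Fin n → ZMod 2, f x * ∑ α : Fin n → ZMod 2, chi x α
      = f 0 * 2 ^ n := by
    rw [Finset.sum_eq_single (0 : Fin n → ZMod 2)]
    · rw [sum_chi']; simp
    · intro x _ hx
      rw [sum_chi']
      simp [hx]
    · simp
  rw [h2, mul_div_assoc, div_self hC, mul_one]

lemma conv {n : ℕ} (f : (Fin n → ZMod 2) → ℝ) (hf : ∀ x, f x * f x = f x)
    (α : Fin n → ZMod 2) :
    ∑ γ : Fin n → ZMod 2, fc f γ * fc f (γ + α) = fc f α := by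
  have hC : ((2:ℝ)^n) ≠ 0 := by positivity
  have step1 : ∀ γ : Fin n → ZMod 2, fc f γ * fc f (γ + α)
      = (∑ x : Fin n → ZMod 2, ∑ y : Fin n → ZMod 2,
          f x * f y * chi α y * chi γ (x + y)) / ((2:ℝ)^n * 2^n) := by
    intro γ
    rw [fc_eq, fc_eq, div_mul_div_comm, Finset.sum_mul_sum]
    congr 1
    apply Finset.sum_congr rfl
    intro x _
    apply Finset.sum_congr rfl
    intro y _
    rw [chi_add_left, chi_add_right]
    ring
  rw [Finset.sum_congr rfl (fun γ _ => step1 γ), ← Finset.sum_div]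
  have swap : ∑ γ : Fin n → ZMod 2, ∑ x : Fin n → ZMod 2, ∑ y : Fin n → ZMod 2,
        f x * f y * chi α y * chi γ (x + y)
      = ∑ x : Fin n → ZMod 2, ∑ y : Fin n → ZMod 2,
        (f x * f y * chi α y) * ∑ γ : Fin n → ZMod 2, chi γ (x + y) := by
    rw [Finset.sum_comm]
    apply Finset.sum_congr rfl
    intro x _
    rw [Finset.sum_comm]
    apply Finset.sum_congr rfl
    intro y _
    rw [Finset.mul_sum]
  rw [swap]
  have inner : ∀ x : Fin n → ZMod 2,
      ∑ y : Fin n → ZMod 2, (f x * f y * chi α y) * ∑ γ : Fin n → ZMod 2, chi γ (x + y)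
      = f x * chi α x * 2 ^ n := by
    intro x
    rw [Finset.sum_eq_single x]
    · rw [gadd_self, sum_chi, if_pos rfl, hf x]
    · intro y _ hy
      rw [sum_chi, if_neg, mul_zero]
      intro hxy
      exact hy (cancel_left hxy)
    · simp
  rw [Finset.sum_congr rfl (fun x _ => inner x)]
  have hS : ∑ x : Fin n → ZMod 2, f x * chi α x * 2 ^ n
      = (∑ x : Fin n → ZMod 2, f x * chi α x) * 2 ^ n := by rw [Finset.sum_mul]
  rw [hS, fc_eq]
  field_simp

lemma key_facts {n k : ℕ} (hk : 1 ≤ k) (f : (Fin n → ZMod 2) → ℝ)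
    (hf : ∀ x, f x = 0 ∨ f x = 1) (hf0 : f 0 = 1)
    (h0 : fc f 0 = 1 / 2 ^ (k - 1))
    (h : ∀ α : Fin n → ZMod 2, α ≠ 0 →
      fc f α = 0 ∨ fc f α = 1 / 2 ^ k ∨ fc f α = -(1 / 2 ^ k))
    (β : Fin n → ZMod 2) (hβ : fc f β = -(1 / 2 ^ k)) :
    (∀ γ, fc f γ = 1 / 2 ^ k → fc f (γ + β) ≠ 1 / 2 ^ k) ∧
    (∀ γ, fc f γ = -(1 / 2 ^ k) → fc f (γ + β) ≠ -(1 / 2 ^ k)) ∧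
    (∀ β', fc f β' = -(1 / 2 ^ k) → β' ≠ β → fc f (β + β') = 1 / 2 ^ k) := by
  set c : ℝ := 1 / 2 ^ k with hcdef
  have hc : 0 < c := by positivity
  -- fc f 0 = 2 * c
  have hpk : (2:ℝ) ^ k = 2 ^ (k - 1) * 2 := by
    rw [← pow_succ]
    congr 1
    omega
  have h00 : fc f 0 = 2 * c := by
    rw [h0, hcdef, hpk]
    have : ((2:ℝ)) ^ (k-1) ≠ 0 := by positivity
    field_simp
  have hsq : ∀ x, f x * f x = f x := by
    intro x
    rcases hf x with hx | hx <;> rw [hx] <;> ring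
  -- inequality bundle
  have hne1 : (0:ℝ) ≠ c := hc.ne
  have hne2 : c ≠ 0 := hc.ne'
  have hne3 : -c ≠ c := by linarith
  have hne4 : c ≠ -c := by linarith
  have hne5 : (0:ℝ) ≠ -c := by linarith
  have hne6 : -c ≠ 0 := by linarith
  have hne7 : 2*c ≠ c := by linarith
  have hne8 : 2*c ≠ -c := by linarith
  have hne9 : 2*c ≠ 0 := by linarith
  -- the finsets
  set A : Finset (Fin n → ZMod 2) := univ.filter (fun α => fc f α = c) with hA
  set B : Finset (Fin n → ZMod 2) := univ.filter (fun α => fc f α = -c) with hB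
  have memA : ∀ γ, γ ∈ A ↔ fc f γ = c := by
    intro γ; rw [hA, mem_filter]; simp
  have memB : ∀ γ, γ ∈ B ↔ fc f γ = -c := by
    intro γ; rw [hB, mem_filter]; simp
  have h0A : (0 : Fin n → ZMod 2) ∉ A := by
    rw [memA, h00]; exact hne7
  have h0B : (0 : Fin n → ZMod 2) ∉ B := by
    rw [memB, h00]; exact hne8
  have hβB : β ∈ B := (memB β).mpr hβ
  have hβ0 : β ≠ 0 := by
    intro hβ0
    rw [hβ0] at hβ
    rw [h00] at hβ
    exact hne8 hβ
  -- Eq1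
  have pt1 : ∀ α, fc f α = (if α = 0 then 2*c else 0) + (if α ∈ A then c else 0)
      + (if α ∈ B then -c else 0) := by
    intro α
    by_cases hα0 : α = 0
    · subst hα0
      simp [h0A, h0B, h00]
    · rcases h α hα0 with hv | hv | hv
      · have hnA : α ∉ A := by simp only [memA, hv]; exact hne1
        have hnB : α ∉ B := by simp only [memB, hv]; exact hne5
        rw [if_neg hα0, if_neg hnA, if_neg hnB, hv]; ring
      · have hA' : α ∈ A := (memA α).mpr hv
        have hnB : α ∉ B := by simp only [memB, hv]; exact hne4
        rw [if_neg hα0, if_pos hA', if_neg hnB, hv]; ring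
      · have hnA : α ∉ A := by simp only [memA, hv]; exact hne3
        have hB' : α ∈ B := (memB α).mpr hv
        rw [if_neg hα0, if_neg hnA, if_pos hB', hv]; ring
  have E1 : 2*c + c * A.card - c * B.card = 1 := by
    have := sum_fc f
    rw [Finset.sum_congr rfl (fun α _ => pt1 α)] at this
    rw [Finset.sum_add_distrib, Finset.sum_add_distrib] at this
    rw [Finset.sum_ite_eq' univ (0 : Fin n → ZMod 2) (fun _ => 2*c)] at this
    rw [Finset.sum_ite_mem, Finset.sum_ite_mem, univ_inter, univ_inter] at this
    rw [Finset.sum_const, Finset.sum_const] at this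
    simp only [mem_univ, if_true, nsmul_eq_mul, hf0] at this
    push_cast at this ⊢
    linarith
  -- Eq2 (Parseval)
  have pt2 : ∀ α, fc f α * fc f α = (if α = 0 then 4*c^2 else 0)
      + (if α ∈ A then c^2 else 0) + (if α ∈ B then c^2 else 0) := by
    intro α
    by_cases hα0 : α = 0
    · subst hα0
      simp [h0A, h0B, h00]
      ring
    · rcases h α hα0 with hv | hv | hv
      · have hnA : α ∉ A := by simp only [memA, hv]; exact hne1
        have hnB : α ∉ B := by simp only [memB, hv]; exact hne5
        rw [if_neg hα0, if_neg hnA, if_neg hnB, hv]; ring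
      · have hA' : α ∈ A := (memA α).mpr hv
        have hnB : α ∉ B := by simp only [memB, hv]; exact hne4
        rw [if_neg hα0, if_pos hA', if_neg hnB, hv]; ring
      · have hnA : α ∉ A := by simp only [memA, hv]; exact hne3
        have hB' : α ∈ B := (memB α).mpr hv
        rw [if_neg hα0, if_neg hnA, if_pos hB', hv]; ring
  have E2 : 4*c^2 + c^2 * A.card + c^2 * B.card = 2*c := by
    have hconv0 := conv f hsq 0
    have : ∑ γ : Fin n → ZMod 2, fc f γ * fc f γ = 2 * c := by
      rw [← h00, ← hconv0]
      apply Finset.sum_congr rfl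
      intro γ _
      rw [add_zero]
    rw [Finset.sum_congr rfl (fun α _ => pt2 α)] at this
    rw [Finset.sum_add_distrib, Finset.sum_add_distrib] at this
    rw [Finset.sum_ite_eq' univ (0 : Fin n → ZMod 2) (fun _ => 4*c^2)] at this
    rw [Finset.sum_ite_mem, Finset.sum_ite_mem, univ_inter, univ_inter] at this
    rw [Finset.sum_const, Finset.sum_const] at this
    simp only [mem_univ, if_true, nsmul_eq_mul] at this
    push_cast at this ⊢
    linarith
  -- 2 * |B| = 2^k - 2
  have hcinv : c * 2^k = 1 := by
    rw [hcdef]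
    have : ((2:ℝ))^k ≠ 0 := by positivity
    field_simp
  have h2b : 2 * (B.card : ℝ) = 2^k - 2 := by
    have e : c * (c * (2 * (B.card:ℝ) - (2^k-2))) = 0 := by
      linear_combination E2 - c * E1 - c * hcinv
    rcases mul_eq_zero.mp e with hh | hh
    · exact absurd hh hne2
    rcases mul_eq_zero.mp hh with hh2 | hh2
    · exact absurd hh2 hne2
    · linarith
  -- the four pair-counting sets
  set P₁ : Finset (Fin n → ZMod 2) := A.filter (fun γ => γ + β ∈ A) with hP₁
  set P₂ : Finset (Fin n → ZMod 2) := B.filter (fun γ => γ + β ∈ B) with hP₂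
  set M₁ : Finset (Fin n → ZMod 2) := A.filter (fun γ => γ + β ∈ B) with hM₁
  set M₂ : Finset (Fin n → ZMod 2) := B.filter (fun γ => γ + β ∈ A) with hM₂
  have memP₁ : ∀ γ, γ ∈ P₁ ↔ fc f γ = c ∧ fc f (γ + β) = c := by
    intro γ; rw [hP₁, mem_filter, memA, memA]
  have memP₂ : ∀ γ, γ ∈ P₂ ↔ fc f γ = -c ∧ fc f (γ + β) = -c := by
    intro γ; rw [hP₂, mem_filter, memB, memB]
  have memM₁ : ∀ γ, γ ∈ M₁ ↔ fc f γ = c ∧ fc f (γ + β) = -c := by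
    intro γ; rw [hM₁, mem_filter, memA, memB]
  have memM₂ : ∀ γ, γ ∈ M₂ ↔ fc f γ = -c ∧ fc f (γ + β) = c := by
    intro γ; rw [hM₂, mem_filter, memB, memA]
  have hnβA : β ∉ A := by simp only [memA, hβ]; exact hne3
  have pt3 : ∀ γ, fc f γ * fc f (γ + β) =
      (if γ = 0 then -(2*c^2) else 0) + (if γ = β then -(2*c^2) else 0)
      + (if γ ∈ P₁ then c^2 else 0) + (if γ ∈ P₂ then c^2 else 0)
      + (if γ ∈ M₁ then -(c^2) else 0) + (if γ ∈ M₂ then -(c^2) else 0) := by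
    intro γ
    by_cases hγ0 : γ = 0
    · subst hγ0
      have n1 : (0 : Fin n → ZMod 2) ∉ P₁ := fun hm => h0A (Finset.mem_filter.mp hm).1
      have n2 : (0 : Fin n → ZMod 2) ∉ P₂ := fun hm => h0B (Finset.mem_filter.mp hm).1
      have n3 : (0 : Fin n → ZMod 2) ∉ M₁ := fun hm => h0A (Finset.mem_filter.mp hm).1
      have n4 : (0 : Fin n → ZMod 2) ∉ M₂ := fun hm => h0B (Finset.mem_filter.mp hm).1
      rw [if_pos rfl, if_neg (Ne.symm hβ0), if_neg n1, if_neg n2, if_neg n3, if_neg n4,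
        zero_add, h00, hβ]
      ring
    · by_cases hγβ : γ = β
      · subst hγβ
        have n1 : γ ∉ P₁ := fun hm => hnβA (Finset.mem_filter.mp hm).1
        have n3 : γ ∉ M₁ := fun hm => hnβA (Finset.mem_filter.mp hm).1
        have n2 : γ ∉ P₂ := by
          intro hm
          have h2 := ((memP₂ γ).mp hm).2
          rw [gadd_self, h00] at h2
          exact hne8 h2
        have n4 : γ ∉ M₂ := by
          intro hm
          have h2 := ((memM₂ γ).mp hm).2
          rw [gadd_self, h00] at h2
          exact hne7 h2
        rw [if_neg hγ0, if_pos rfl, if_neg n1, if_neg n2, if_neg n3, if_neg n4,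
          gadd_self, hβ, h00]
        ring
      · have hγβ0 : γ + β ≠ 0 := by
          intro e
          exact hγβ (cancel_left e).symm
        rcases h γ hγ0 with hu | hu | hu <;> rcases h (γ + β) hγβ0 with hv | hv | hv <;>
          simp only [memP₁, memP₂, memM₁, memM₂, hu, hv, if_neg hγ0, if_neg hγβ] <;>
          simp [hne1, hne3, hne4, hne5] <;> ring
  -- sum the decomposition
  have E3raw : -(2*c^2) + -(2*c^2) + c^2 * P₁.card + c^2 * P₂.card
      + (-(c^2)) * M₁.card + (-(c^2)) * M₂.card = -c := by
    have hconvβ := conv f hsq β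
    rw [Finset.sum_congr rfl (fun γ _ => pt3 γ)] at hconvβ
    rw [Finset.sum_add_distrib, Finset.sum_add_distrib, Finset.sum_add_distrib,
      Finset.sum_add_distrib, Finset.sum_add_distrib] at hconvβ
    rw [Finset.sum_ite_eq' univ (0 : Fin n → ZMod 2) (fun _ => -(2*c^2)),
      Finset.sum_ite_eq' univ β (fun _ => -(2*c^2))] at hconvβ
    rw [Finset.sum_ite_mem, Finset.sum_ite_mem, Finset.sum_ite_mem, Finset.sum_ite_mem,
      univ_inter, univ_inter, univ_inter, univ_inter] at hconvβ
    rw [Finset.sum_const, Finset.sum_const, Finset.sum_const, Finset.sum_const] at hconvβ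
    simp only [mem_univ, if_true, nsmul_eq_mul, hβ] at hconvβ
    push_cast at hconvβ ⊢
    linarith
  have E3 : (M₁.card : ℝ) + M₂.card - P₁.card - P₂.card = 2^k - 4 := by
    have e : c * (c * ((M₁.card : ℝ) + M₂.card - P₁.card - P₂.card - (2^k - 4))) = 0 := by
      linear_combination (-1 : ℝ) * E3raw - c * hcinv
    rcases mul_eq_zero.mp e with hh | hh
    · exact absurd hh hne2
    rcases mul_eq_zero.mp hh with hh2 | hh2
    · exact absurd hh2 hne2
    · linarith
  -- |M₁| = |M₂|
  have hm12 : M₁.card = M₂.card := by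
    apply Finset.card_bij (fun γ _ => γ + β)
    · intro γ hγ
      obtain ⟨h1, h2⟩ := Finset.mem_filter.mp hγ
      apply Finset.mem_filter.mpr
      refine ⟨h2, ?_⟩
      rwa [add_assoc, gadd_self, add_zero]
    · intro a _ b _ hab
      exact add_right_cancel hab
    · intro δ hδ
      obtain ⟨h1, h2⟩ := Finset.mem_filter.mp hδ
      refine ⟨δ + β, ?_, ?_⟩
      · apply Finset.mem_filter.mpr
        refine ⟨h2, ?_⟩
        rwa [add_assoc, gadd_self, add_zero]
      · rw [add_assoc, gadd_self, add_zero]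
  -- image of M₁ sits inside B.erase β
  have himg : M₁.image (fun γ => γ + β) ⊆ B.erase β := by
    intro x hx
    obtain ⟨γ, hγ, rfl⟩ := Finset.mem_image.mp hx
    obtain ⟨h1, h2⟩ := Finset.mem_filter.mp hγ
    apply Finset.mem_erase.mpr
    refine ⟨?_, h2⟩
    intro e
    have : γ = 0 := by
      have e' : γ + β = 0 + β := by rw [zero_add]; exact e
      exact add_right_cancel e'
    rw [this] at h1
    exact h0A h1
  have hinj : Function.Injective (fun γ : Fin n → ZMod 2 => γ + β) := by
    intro a b hab
    exact add_right_cancel hab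
  have hcardimg : (M₁.image (fun γ => γ + β)).card = M₁.card :=
    Finset.card_image_of_injective _ hinj
  have herase1 : (B.erase β).card + 1 = B.card := Finset.card_erase_add_one hβB
  have hm1le : (M₁.card : ℝ) + 1 ≤ B.card := by
    have : M₁.card + 1 ≤ B.card := by
      have hle := Finset.card_le_card himg
      omega
    exact_mod_cast this
  -- force the counts
  have hp1 : (0:ℝ) ≤ P₁.card := Nat.cast_nonneg _
  have hp2 : (0:ℝ) ≤ P₂.card := Nat.cast_nonneg _
  have hm12' : (M₁.card : ℝ) = M₂.card := by exact_mod_cast hm12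
  have hP₁0 : (P₁.card : ℝ) = 0 := by linarith
  have hP₂0 : (P₂.card : ℝ) = 0 := by linarith
  have hm1eq : (M₁.card : ℝ) = (B.erase β).card := by
    have he : ((B.erase β).card : ℝ) + 1 = B.card := by exact_mod_cast herase1
    linarith
  have hP₁emp : P₁ = ∅ := by
    rw [← Finset.card_eq_zero]
    exact_mod_cast hP₁0
  have hP₂emp : P₂ = ∅ := by
    rw [← Finset.card_eq_zero]
    exact_mod_cast hP₂0
  have himgeq : M₁.image (fun γ => γ + β) = B.erase β := by
    apply Finset.eq_of_subset_of_card_le himg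
    rw [hcardimg]
    have : M₁.card = (B.erase β).card := by exact_mod_cast hm1eq
    omega
  refine ⟨?_, ?_, ?_⟩
  · intro γ h1 h2
    have : γ ∈ P₁ := (memP₁ γ).mpr ⟨h1, h2⟩
    rw [hP₁emp] at this
    exact absurd this (Finset.notMem_empty γ)
  · intro γ h1 h2
    have : γ ∈ P₂ := (memP₂ γ).mpr ⟨h1, h2⟩
    rw [hP₂emp] at this
    exact absurd this (Finset.notMem_empty γ)
  · intro β' hβ' hneβ
    have hmem : β' ∈ B.erase β := Finset.mem_erase.mpr ⟨hneβ, (memB β').mpr hβ'⟩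
    rw [← himgeq] at hmem
    obtain ⟨γ, hγM, hγe⟩ := Finset.mem_image.mp hmem
    have hγA : fc f γ = c := ((memM₁ γ).mp hγM).1
    have hγval : β + β' = γ := by
      rw [← hγe, add_comm γ β, ← add_assoc, gadd_self, zero_add]
    rw [hγval]
    exact hγA


theorem stmt_8 {n k : ℕ} (hk : 1 ≤ k) (hn : k ≤ n) (f : (Fin n → ZMod 2) → ℝ)
    (hf : ∀ x, f x = 0 ∨ f x = 1) (hf0 : f 0 = 1)
    (h0 : fc f 0 = 1 / 2 ^ (k - 1))
    (h : ∀ α : Fin n → ZMod 2, α ≠ 0 →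
      fc f α = 0 ∨ fc f α = 1 / 2 ^ k ∨ fc f α = -(1 / 2 ^ k)) :
    ({β : Fin n → ZMod 2 | fc f β = -(1 / 2 ^ k)} +
        {β : Fin n → ZMod 2 | fc f β = -(1 / 2 ^ k)}) ∩
      ({β : Fin n → ZMod 2 | fc f β = -(1 / 2 ^ k)} +
        {β : Fin n → ZMod 2 | fc f β = -(1 / 2 ^ k)} +
        {β : Fin n → ZMod 2 | fc f β = -(1 / 2 ^ k)}) = ∅ := by
  have hc : (0:ℝ) < 1/2^k := by positivity
  have h00 : fc f 0 = 2 * (1/2^k) := by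
    rw [h0]
    have hpk : (2:ℝ)^k = 2^(k-1)*2 := by
      rw [← pow_succ]
      congr 1
      omega
    rw [hpk]
    have : ((2:ℝ))^(k-1) ≠ 0 := by positivity
    field_simp
  apply Set.eq_empty_iff_forall_notMem.mpr
  rintro x ⟨hx2, hx3⟩
  obtain ⟨b1, h1, b2, h2, hx12⟩ := Set.mem_add.mp hx2
  obtain ⟨y, hy, b5, h5, hxe⟩ := Set.mem_add.mp hx3
  obtain ⟨b3, h3, b4, h4, hy34⟩ := Set.mem_add.mp hy
  simp only [Set.mem_setOf_eq] at h1 h2 h3 h4 h5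
  by_cases e12 : b1 = b2
  · subst e12
    rw [gadd_self] at hx12
    have hx0 : x = 0 := hx12.symm
    have hb5y : b5 = y := cancel_left (hxe.trans hx0)
    by_cases e34 : b3 = b4
    · subst e34
      have hy0 : y = 0 := by rw [← hy34, gadd_self]
      rw [hb5y, hy0, h00] at h5
      linarith
    · have K := key_facts hk f hf hf0 h0 h b3 h3
      have hA34 : fc f (b3 + b4) = 1/2^k := K.2.2 b4 h4 (fun e => e34 e.symm)
      rw [hb5y, ← hy34] at h5
      rw [h5] at hA34
      linarith
  · have K2 := key_facts hk f hf hf0 h0 h b2 h2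
    have hxA : fc f x = 1/2^k := by
      rw [← hx12, add_comm b1 b2]
      exact K2.2.2 b1 h1 e12
    by_cases e34 : b3 = b4
    · subst e34
      have hy0 : y = 0 := by rw [← hy34, gadd_self]
      rw [hy0, zero_add] at hxe
      rw [hxe, hxA] at h5
      linarith
    · have K3 := key_facts hk f hf hf0 h0 h b3 h3
      have hA34 : fc f (b3 + b4) = 1/2^k := K3.2.2 b4 h4 (fun e => e34 e.symm)
      have K5 := key_facts hk f hf hf0 h0 h b5 h5
      apply K5.1 (b3 + b4) hA34
      rw [hy34, hxe]
      exact hxA
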